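/- Let 0 < μ < L and suppose vectors x₀, x₁, x* ∈ ℝ^n, g₀, g₁ ∈ ℝ^n and reals f₀, f₁, f* satisfy the five inequalities: (1) f₀ ≥ f₁ + ⟨g₁, x₀ - x₁⟩ + (1/(2(1-μ/L)))((1/L)‖g₀-g₁‖² + μ‖x₀-x₁‖² - (2μ/L)⟨g₁-g₀, x₁-x₀⟩); (2) f* ≥ f₀ + ⟨g₀, x* - x₀⟩ + (1/(2(1-μ/L)))((1/L)‖g₀‖² + μ‖x*-x₀‖² - (2μ/L)⟨g₀, x₀-x*⟩); (3) f* ≥ f₁ + ⟨g₁, x* - x₁⟩ + (1/(2(1-μ/L)))((1/L)‖g₁‖² + μ‖x*-x₁‖² - (2μ/L)⟨g₁, x₁-x*⟩); (4) -g₀ᵀg₁ ≥ 0; (5) g₁ᵀ(x₀ - x₁) ≥ 0. Then f₁ - f* ≤ ((L-μ)/(L+μ))²(f₀ - f*). -/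
import Mathlib

open RealInnerProductSpace

/-- The `F_{μ,L}` interpolation inequality between the triples `(xi, fi, gi)` and
`(xj, fj, gj)`. -/
def InterpIneq {n : ℕ} (μ L : ℝ) (xi xj : EuclideanSpace ℝ (Fin n)) (fi fj : ℝ)
    (gi gj : EuclideanSpace ℝ (Fin n)) : Prop :=
  fi ≥ fj + ⟪gj, xi - xj⟫ + 1 / (2 * (1 - μ / L)) *
    ((1 / L) * ‖gi - gj‖ ^ 2 + μ * ‖xi - xj‖ ^ 2 - (2 * μ / L) * ⟪gj - gi, xj - xi⟫)

set_option maxHeartbeats 2000000 in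
theorem stmt5 {n : ℕ} (μ L : ℝ) (hμ : 0 < μ) (hμL : μ < L)
    (x₀ x₁ xstar g₀ g₁ : EuclideanSpace ℝ (Fin n)) (f₀ f₁ fstar : ℝ)
    (h1 : InterpIneq μ L x₀ x₁ f₀ f₁ g₀ g₁)
    (h2 : InterpIneq μ L xstar x₀ fstar f₀ 0 g₀)
    (h3 : InterpIneq μ L xstar x₁ fstar f₁ 0 g₁)
    (h4 : -⟪g₀, g₁⟫ ≥ 0)
    (h5 : ⟪g₁, x₀ - x₁⟫ ≥ 0) :
    f₁ - fstar ≤ ((L - μ) / (L + μ)) ^ 2 * (f₀ - fstar) := by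
  have hL : (0:ℝ) < L := hμ.trans hμL
  have hLm : (0:ℝ) < L - μ := by linarith
  have hLp : (0:ℝ) < L + μ := by linarith
  have h3μ : (0:ℝ) < L + 3*μ := by linarith
  have hLne : L ≠ 0 := hL.ne'
  have hone : (1 : ℝ) - μ / L ≠ 0 := by
    have : 0 < 1 - μ / L := by
      rw [sub_pos, div_lt_one hL]; exact hμL
    exact this.ne'
  simp only [InterpIneq, zero_sub, norm_neg, sub_zero] at h1 h2 h3
  -- cleared slacks
  have e1 : 2*(L-μ)*(f₀ - f₁ - ⟪g₁, x₀ - x₁⟫) - ‖g₀ - g₁‖^2 - μ*L*‖x₀-x₁‖^2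
      + 2*μ*⟪g₁-g₀, x₁-x₀⟫
      = 2*(L-μ)*(f₀ - (f₁ + ⟪g₁, x₀ - x₁⟫ + 1 / (2 * (1 - μ / L)) *
        ((1 / L) * ‖g₀ - g₁‖ ^ 2 + μ * ‖x₀ - x₁‖ ^ 2 - (2 * μ / L) * ⟪g₁ - g₀, x₁ - x₀⟫))) := by
    field_simp
    ring
  have hE1 : 0 ≤ 2*(L-μ)*(f₀ - f₁ - ⟪g₁, x₀ - x₁⟫) - ‖g₀ - g₁‖^2 - μ*L*‖x₀-x₁‖^2
      + 2*μ*⟪g₁-g₀, x₁-x₀⟫ := by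
    rw [e1]
    exact mul_nonneg (by linarith) (sub_nonneg.mpr h1)
  have e2 : 2*(L-μ)*(fstar - f₀ - ⟪g₀, xstar - x₀⟫) - ‖g₀‖^2 - μ*L*‖xstar-x₀‖^2
      + 2*μ*⟪g₀, x₀-xstar⟫
      = 2*(L-μ)*(fstar - (f₀ + ⟪g₀, xstar - x₀⟫ + 1 / (2 * (1 - μ / L)) *
        ((1 / L) * ‖g₀‖ ^ 2 + μ * ‖xstar - x₀‖ ^ 2 - (2 * μ / L) * ⟪g₀, x₀ - xstar⟫))) := by
    field_simp
    ring
  have hE2 : 0 ≤ 2*(L-μ)*(fstar - f₀ - ⟪g₀, xstar - x₀⟫) - ‖g₀‖^2 - μ*L*‖xstar-x₀‖^2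
      + 2*μ*⟪g₀, x₀-xstar⟫ := by
    rw [e2]
    exact mul_nonneg (by linarith) (sub_nonneg.mpr h2)
  have e3 : 2*(L-μ)*(fstar - f₁ - ⟪g₁, xstar - x₁⟫) - ‖g₁‖^2 - μ*L*‖xstar-x₁‖^2
      + 2*μ*⟪g₁, x₁-xstar⟫
      = 2*(L-μ)*(fstar - (f₁ + ⟪g₁, xstar - x₁⟫ + 1 / (2 * (1 - μ / L)) *
        ((1 / L) * ‖g₁‖ ^ 2 + μ * ‖xstar - x₁‖ ^ 2 - (2 * μ / L) * ⟪g₁, x₁ - xstar⟫))) := by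
    field_simp
    ring
  have hE3 : 0 ≤ 2*(L-μ)*(fstar - f₁ - ⟪g₁, xstar - x₁⟫) - ‖g₁‖^2 - μ*L*‖xstar-x₁‖^2
      + 2*μ*⟪g₁, x₁-xstar⟫ := by
    rw [e3]
    exact mul_nonneg (by linarith) (sub_nonneg.mpr h3)
  have hW1 : (0:ℝ) ≤ ‖(L+3*μ) • g₀ + (L+μ) • g₁ - (μ*(3*L+μ)) • (x₀-xstar)
      + (μ*(L+μ)) • (x₁-xstar)‖^2 := sq_nonneg _
  have hW2 : (0:ℝ) ≤ ‖(2*(L+μ)) • g₁ + ((L-μ)^2) • (x₀-xstar) - ((L+μ)^2) • (x₁-xstar)‖^2 :=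
    sq_nonneg _
  have key : 2*(L+3*μ)*(L-μ)*((L+μ)^2*(f₁-fstar) - (L-μ)^2*(f₀-fstar))
      = -((L+3*μ)*(L-μ)*(L+μ)*(2*(L-μ)*(f₀ - f₁ - ⟪g₁, x₀ - x₁⟫) - ‖g₀ - g₁‖^2
            - μ*L*‖x₀-x₁‖^2 + 2*μ*⟪g₁-g₀, x₁-x₀⟫))
        - 2*μ*(L+3*μ)*(L-μ)*(2*(L-μ)*(fstar - f₀ - ⟪g₀, xstar - x₀⟫) - ‖g₀‖^2
            - μ*L*‖xstar-x₀‖^2 + 2*μ*⟪g₀, x₀-xstar⟫)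
        - 2*μ*(L+3*μ)*(L+μ)*(2*(L-μ)*(fstar - f₁ - ⟪g₁, xstar - x₁⟫) - ‖g₁‖^2
            - μ*L*‖xstar-x₁‖^2 + 2*μ*⟪g₁, x₁-xstar⟫)
        - 4*(L+3*μ)*(L-μ)*(L+μ)*(-⟪g₀, g₁⟫)
        - 2*(L+3*μ)*(L-μ)*(L+μ)^2*⟪g₁, x₀ - x₁⟫
        - (L-μ)*‖(L+3*μ) • g₀ + (L+μ) • g₁ - (μ*(3*L+μ)) • (x₀-xstar)
            + (μ*(L+μ)) • (x₁-xstar)‖^2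
        - μ*‖(2*(L+μ)) • g₁ + ((L-μ)^2) • (x₀-xstar) - ((L+μ)^2) • (x₁-xstar)‖^2 := by
    simp only [← real_inner_self_eq_norm_sq, inner_sub_left, inner_sub_right, inner_add_left,
      inner_add_right, real_inner_smul_left, real_inner_smul_right, real_inner_comm]
    ring
  have t1 := mul_nonneg (mul_nonneg (mul_nonneg h3μ.le hLm.le) hLp.le) hE1
  have t2 := mul_nonneg (mul_nonneg (mul_nonneg (by linarith : (0:ℝ) ≤ 2*μ) h3μ.le) hLm.le) hE2
  have t3 := mul_nonneg (mul_nonneg (mul_nonneg (by linarith : (0:ℝ) ≤ 2*μ) h3μ.le) hLp.le) hE3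
  have t4 := mul_nonneg (mul_nonneg (mul_nonneg (by linarith : (0:ℝ) ≤ 4*(L+3*μ)) hLm.le) hLp.le) h4
  have t5 := mul_nonneg (mul_nonneg (mul_nonneg (by linarith : (0:ℝ) ≤ 2*(L+3*μ)) hLm.le)
    (by positivity : (0:ℝ) ≤ (L+μ)^2)) h5
  have t6 := mul_nonneg hLm.le hW1
  have t7 := mul_nonneg hμ.le hW2
  have hfin : 2*(L+3*μ)*(L-μ)*((L+μ)^2*(f₁-fstar) - (L-μ)^2*(f₀-fstar)) ≤ 0 := by
    rw [key]; linarith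
  have hX : (L+μ)^2*(f₁-fstar) - (L-μ)^2*(f₀-fstar) ≤ 0 := by
    have hc : (0:ℝ) < 2*(L+3*μ)*(L-μ) := mul_pos (mul_pos two_pos h3μ) hLm
    by_contra h
    push_neg at h
    nlinarith [mul_pos hc h, hfin]
  rw [div_pow, div_mul_eq_mul_div, le_div_iff₀ (by positivity : (0:ℝ) < (L+μ)^2)]
  linarith [hX]
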